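/- Let y be the fixed point beginning in the letter c of the substitution τ : b ↦ ccb, c ↦ cb on the alphabet {b, c}. Then y is rich. -/

import Mathlib

open List

/-- The prefix of length `n` of an infinite word `x`. -/
def wordTake {A : Type*} (x : ℕ → A) (n : ℕ) : List A := (List.range n).map x

/-- The finite word `u` occurs in the infinite word `x` at position `i`. -/
def OccursAt {A : Type*} (u : List A) (x : ℕ → A) (i : ℕ) : Prop :=
  (List.range u.length).map (fun k => x (i + k)) = u

/-- `u` is a factor of the infinite word `x`. -/
def IsFactor {A : Type*} (u : List A) (x : ℕ → A) : Prop := ∃ i, OccursAt u x i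

/-- A palindrome is a finite word equal to its reversal. -/
def IsPalindrome {A : Type*} (u : List A) : Prop := u.reverse = u

/-- The number of distinct palindromic factors of a finite word `u`
(including the empty word). -/
noncomputable def palCount {A : Type*} (u : List A) : ℕ :=
  {v : List A | v <:+: u ∧ IsPalindrome v}.ncard

/-- A finite word `u` is rich if it has `|u| + 1` distinct palindromic factors. -/
def RichList {A : Type*} (u : List A) : Prop := palCount u = u.length + 1

/-- An infinite word is rich if all of its factors are rich. -/
def RichWord {A : Type*} (x : ℕ → A) : Prop := ∀ u, IsFactor u x → RichList u

/-- The defect of a finite word. -/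
noncomputable def defect {A : Type*} (u : List A) : ℕ := u.length + 1 - palCount u

/-- An infinite word has finite defect if the defects of its prefixes are bounded. -/
def FiniteDefect {A : Type*} (x : ℕ → A) : Prop :=
  ∃ C, ∀ n, defect (wordTake x n) ≤ C

/-- The extension of a morphism (given by its values on letters) to finite words. -/
def listApply {A B : Type*} (f : A → List B) (w : List A) : List B := w.flatMap f

/-- A morphism is non-erasing if the image of every letter is non-empty. -/
def NonErasing {A B : Type*} (f : A → List B) : Prop := ∀ a, f a ≠ []

/-- `y` is the image of the infinite word `x` under the morphism `f`, i.e. `y = f(x)` :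
the image of every prefix of `x` is a prefix of `y`. -/
def IsMorphicImage {A B : Type*} (f : A → List B) (x : ℕ → A) (y : ℕ → B) : Prop :=
  ∀ k, ∃ n, listApply f (wordTake x k) = wordTake y n

/-- A substitution is primitive if some power `τ^N` (`N ≥ 1`) maps every letter to a word
containing every letter. -/
def Primitive {A : Type*} (τ : A → List A) : Prop :=
  ∃ N : ℕ, 1 ≤ N ∧ ∀ a b : A, b ∈ (listApply τ)^[N] [a]

/-- An infinite word is pure primitive morphic if it is a fixed point of a primitive
substitution. -/
def PurePrimitiveMorphic {A : Type*} (x : ℕ → A) : Prop :=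
  ∃ τ : A → List A, NonErasing τ ∧ Primitive τ ∧ IsMorphicImage τ x x

/-- An infinite word is primitive morphic if it is the morphic image of a pure primitive
morphic word over some finite alphabet. -/
def PrimitiveMorphic {B : Type*} (y : ℕ → B) : Prop :=
  ∃ (A : Type) (_ : Fintype A) (f : A → List B) (x : ℕ → A),
    NonErasing f ∧ PurePrimitiveMorphic x ∧ IsMorphicImage f x y

/-- A morphism is of class P if `f(a) = p qₐ` with `p` and each `qₐ` palindromes. -/
def ClassP {A B : Type*} (f : A → List B) : Prop :=
  ∃ p : List B, IsPalindrome p ∧ ∀ a, ∃ q : List B, IsPalindrome q ∧ f a = p ++ q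

/-- Two morphisms are conjugate if `f(a)u = u g(a)` for all `a`, or `u f(a) = g(a) u`
for all `a`, for some finite word `u`. -/
def Conjugate {A B : Type*} (f g : A → List B) : Prop :=
  ∃ u : List B, (∀ a, f a ++ u = u ++ g a) ∨ (∀ a, u ++ f a = g a ++ u)

/-- Class P' : morphisms conjugate to some class P morphism. -/
def ClassP' {A B : Type*} (f : A → List B) : Prop :=
  ∃ g : A → List B, ClassP g ∧ Conjugate f g

/-- `FP'` : infinite words fixed by some primitive substitution of class P'. -/
def InFPprime {A : Type*} (x : ℕ → A) : Prop :=
  ∃ τ : A → List A, NonErasing τ ∧ Primitive τ ∧ ClassP' τ ∧ IsMorphicImage τ x x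

/-- The number of occurrences of `u` in the finite word `w`. -/
noncomputable def occCount {A : Type*} (u w : List A) : ℕ :=
  {i : ℕ | i + u.length ≤ w.length ∧ (w.drop i).take u.length = u}.ncard

/-- `v` is a first return to the non-empty factor `u` in `x` : `vu` is a factor of `x`
beginning (and ending) in `u` and containing exactly two occurrences of `u`;
`vu` is then the corresponding complete first return to `u`. -/
def FirstReturn {A : Type*} (u : List A) (x : ℕ → A) (v : List A) : Prop :=
  u ≠ [] ∧ IsFactor (v ++ u) x ∧ u <+: (v ++ u) ∧ occCount u (v ++ u) = 2

/-- An infinite word is uniformly recurrent if every factor occurs in every sufficiently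
long factor. -/
def UniformlyRecurrent {A : Type*} (x : ℕ → A) : Prop :=
  ∀ u : List A, IsFactor u x → ∃ n, ∀ v : List A, IsFactor v x → v.length = n → u <:+: v

/-- `d` is the derived word of `x` at the non-empty prefix `u` : `x` factors as a
concatenation `r 0, r 1, r 2, …` of first returns to `u` (each complete first return
`r n ++ u` occurring at the corresponding partial-sum position), and `d n` is the rank
of `r n` in the order of first occurrence, i.e. the number of distinct return words
appearing strictly before the first occurrence of `r n`. -/
def IsDerivedWord {A : Type*} (x : ℕ → A) (u : List A) (d : ℕ → ℕ) : Prop :=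
  ∃ r : ℕ → List A,
    (∀ n, FirstReturn u x (r n)) ∧
    (∀ n, OccursAt (r n ++ u) x (∑ i ∈ Finset.range n, (r i).length)) ∧
    (∀ n, d n = (r '' {k | k < sInf {k | r k = r n}}).ncard)

/-- Class P_ret of Balková et al.: a morphism injective on letters such that for some
palindrome `p` (the marker), each `f(a)p` is a palindrome beginning and ending in `p`
and containing exactly two occurrences of `p`. -/
def ClassPret {A B : Type*} (f : A → List B) : Prop :=
  (∀ a b : A, a ≠ b → f a ≠ f b) ∧
  ∃ p : List B, IsPalindrome p ∧ ∀ a,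
    IsPalindrome (f a ++ p) ∧ p <+: (f a ++ p) ∧ p <:+ (f a ++ p) ∧
      occCount p (f a ++ p) = 2
/-! ### Auxiliary machinery -/

@[simp] lemma listApply_nil {A B : Type*} (f : A → List B) : listApply f [] = [] := rfl
@[simp] lemma listApply_cons {A B : Type*} (f : A → List B) (a : A) (l : List A) :
    listApply f (a :: l) = f a ++ listApply f l := rfl
@[simp] lemma listApply_append {A B : Type*} (f : A → List B) (l₁ l₂ : List A) :
    listApply f (l₁ ++ l₂) = listApply f l₁ ++ listApply f l₂ := by
  induction l₁ with
  | nil => simp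
  | cons a l ih => simp [ih]

def tauf : Fin 2 → List (Fin 2) := ![[1, 1, 0], [1, 0]]
def psif : Fin 2 → List (Fin 2) := ![[1, 0, 1], [0, 1]]
def rhof : Fin 2 → List (Fin 2) := ![[0, 1, 1], [0, 1]]

@[simp] lemma tauf_zero : tauf 0 = [1, 1, 0] := rfl
@[simp] lemma tauf_one : tauf 1 = [1, 0] := rfl

lemma fin2cases (x : Fin 2) : x = 0 ∨ x = 1 := by revert x; decide

lemma E1 (w : List (Fin 2)) : listApply tauf w ++ [1] = 1 :: listApply psif w := by
  induction w with
  | nil => rfl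
  | cons a l ih =>
    rcases fin2cases a with h | h <;> subst h <;>
      simp only [listApply_cons, append_assoc, ih] <;> rfl

lemma E2 (w : List (Fin 2)) : listApply rhof w ++ [0, 1] = 0 :: 1 :: listApply psif w := by
  induction w with
  | nil => rfl
  | cons a l ih =>
    rcases fin2cases a with h | h <;> subst h <;>
      simp only [listApply_cons, append_assoc, ih] <;> rfl

lemma E3 (w : List (Fin 2)) : (listApply tauf w).reverse = listApply rhof w.reverse := by
  induction w with
  | nil => rfl
  | cons a l ih =>
    rcases fin2cases a with h | h <;> subst h <;>
      simp [listApply_cons, reverse_append, ih] <;> rfl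

lemma CONJ : ∀ (w w' : List (Fin 2)), 1 :: w' = w ++ [1] →
    listApply rhof w' = listApply psif w := by
  intro w
  induction w with
  | nil => intro w' h; simp at h; simp [h]
  | cons a v ih =>
    intro w' h
    simp only [cons_append] at h
    obtain ⟨ha, hw⟩ := List.cons.inj h
    subst hw
    rcases fin2cases a with h0 | h0
    · exfalso; subst h0; exact absurd ha (by decide)
    · subst h0
      simp only [listApply_append, listApply_cons, listApply_nil, append_nil]
      have h1 : rhof 1 = [0, 1] := rfl
      have h2 : psif 1 = [0, 1] := rfl
      rw [h1, h2]
      simpa using E2 v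

lemma palQstep (w : List (Fin 2)) (h : IsPalindrome (w ++ [1])) :
    IsPalindrome (listApply tauf w ++ [1]) := by
  unfold IsPalindrome at *
  have h' : 1 :: w.reverse = w ++ [1] := by simpa [reverse_append] using h
  have hc := CONJ w w.reverse h'
  rw [reverse_append, E3]
  simp only [reverse_cons, reverse_nil, nil_append]
  rw [show ([1] : List (Fin 2)) ++ listApply rhof w.reverse
      = 1 :: listApply rhof w.reverse from rfl, hc, ← E1]

lemma palZstep (Z : List (Fin 2)) (h : IsPalindrome Z) :
    IsPalindrome ([1, 0] ++ listApply tauf Z ++ [1]) := by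
  unfold IsPalindrome at *
  have hshape : ([1, 0] : List (Fin 2)) ++ listApply tauf Z ++ [1]
      = 1 :: 0 :: (listApply tauf Z ++ [1]) := by simp
  rw [hshape]
  have h3 : (listApply tauf Z).reverse = listApply rhof Z := by rw [E3, h]
  calc (1 :: 0 :: (listApply tauf Z ++ [1])).reverse
      = (listApply tauf Z ++ [1]).reverse ++ [0, 1] := by simp
    _ = (1 :: (listApply tauf Z).reverse) ++ [0, 1] := by simp [reverse_append]
    _ = 1 :: (listApply rhof Z ++ [0, 1]) := by rw [h3]; simp
    _ = 1 :: (0 :: 1 :: listApply psif Z) := by rw [E2]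
    _ = 1 :: 0 :: (listApply tauf Z ++ [1]) := by rw [E1]

lemma lenTau (u : List (Fin 2)) : (listApply tauf u).length = 2 * u.length + u.count 0 := by
  induction u with
  | nil => rfl
  | cons a l ih =>
    rcases fin2cases a with h | h <;> subst h <;>
      simp [listApply_cons, ih, count_cons] <;> omega

lemma countTau (u : List (Fin 2)) : (listApply tauf u).count 0 = u.length := by
  induction u with
  | nil => rfl
  | cons a l ih =>
    rcases fin2cases a with h | h <;> subst h <;>
      simp [listApply_cons, ih, count_append]

lemma endsTau (u : List (Fin 2)) (a : Fin 2) :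
    ∃ v, listApply tauf (u ++ [a]) = v ++ [1, 0] := by
  rcases fin2cases a with h | h <;> subst h
  · exact ⟨listApply tauf u ++ [1], by simp [listApply_append]⟩
  · exact ⟨listApply tauf u, by simp [listApply_append]⟩

lemma headTau (a : Fin 2) : ∃ v, tauf a = 1 :: v := by
  rcases fin2cases a with h | h <;> subst h
  · exact ⟨[1, 0], rfl⟩
  · exact ⟨[0], rfl⟩

/-! ### Palindrome counting: upper bounds -/

section UpperBound
variable {A : Type*}

def PalSet (u : List A) : Set (List A) := {v : List A | v <:+: u ∧ IsPalindrome v}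

lemma palCount_eq (u : List A) : palCount u = (PalSet u).ncard := rfl

lemma palSet_finite (u : List A) : (PalSet u).Finite := by
  apply Set.Finite.subset u.sublists.finite_toSet
  intro v hv
  simp only [Set.mem_setOf_eq, mem_sublists]
  exact hv.1.sublist

lemma infix_of_proper {v s t w : List A} {a : A} (hst : s ++ v ++ t = w ++ [a])
    (ht : t ≠ []) : v <:+: w := by
  obtain ⟨t', x, rfl⟩ := t.eq_nil_or_concat.resolve_left ht
  simp only [concat_eq_append] at hst
  rw [show s ++ v ++ (t' ++ [x]) = (s ++ v ++ t') ++ [x] by simp [append_assoc]] at hst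
  have h2 : s ++ v ++ t' = w := append_inj_left' hst rfl
  exact ⟨s, t', by simpa [append_assoc] using h2⟩

lemma suffix_of_new {w : List A} {a : A} :
    ∀ v ∈ PalSet (w ++ [a]) \ PalSet w, v <:+ w ++ [a] := by
  rintro v ⟨⟨⟨s, t, hst⟩, hpal⟩, hnot⟩
  rcases eq_or_ne t [] with rfl | ht
  · exact ⟨s, by simpa using hst⟩
  · exact absurd ⟨infix_of_proper hst ht, hpal⟩ hnot

lemma new_pal_subsingleton (w : List A) (a : A) :
    (PalSet (w ++ [a]) \ PalSet w).Subsingleton := by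
  have key : ∀ v v', v ∈ PalSet (w ++ [a]) \ PalSet w →
      v' ∈ PalSet (w ++ [a]) \ PalSet w → v <:+ v' → v = v' := by
    rintro v v' hv hv' hsuf
    have hpal : v.reverse = v := hv.1.2
    have hpal' : v'.reverse = v' := hv'.1.2
    have hnot : v ∉ PalSet w := hv.2
    have hpre : v <+: v' := by
      have h2 : v.reverse <+: v'.reverse := reverse_prefix.mpr hsuf
      rwa [hpal, hpal'] at h2
    obtain ⟨r, rfl⟩ := hpre
    rcases eq_or_ne r [] with rfl | hr
    · simp
    · exfalso
      obtain ⟨s, hs⟩ := suffix_of_new (v ++ r) hv'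
      have : s ++ v ++ r = w ++ [a] := by simpa [append_assoc] using hs
      exact hnot ⟨infix_of_proper this hr, hpal⟩
  intro v hv v' hv'
  rcases suffix_or_suffix_of_suffix (suffix_of_new v hv) (suffix_of_new v' hv') with h | h
  · exact key v v' hv hv' h
  · exact (key v' v hv' hv h).symm

lemma palCount_append_singleton (w : List A) (a : A) :
    palCount (w ++ [a]) ≤ palCount w + 1 := by
  have hsub : PalSet (w ++ [a]) ⊆ PalSet w ∪ (PalSet (w ++ [a]) \ PalSet w) := by
    intro v hv
    by_cases h : v ∈ PalSet w
    · exact Or.inl h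
    · exact Or.inr ⟨hv, h⟩
  have hfin : (PalSet w).Finite := palSet_finite w
  have hfinD : (PalSet (w ++ [a]) \ PalSet w).Finite :=
    (palSet_finite (w ++ [a])).subset Set.diff_subset
  calc palCount (w ++ [a]) = (PalSet (w ++ [a])).ncard := rfl
    _ ≤ (PalSet w ∪ (PalSet (w ++ [a]) \ PalSet w)).ncard :=
        Set.ncard_le_ncard hsub (hfin.union hfinD)
    _ ≤ (PalSet w).ncard + (PalSet (w ++ [a]) \ PalSet w).ncard := Set.ncard_union_le _ _
    _ ≤ palCount w + 1 := by
        rcases (new_pal_subsingleton w a).eq_empty_or_singleton with h | ⟨x, h⟩ <;>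
          simp [h, palCount_eq]

lemma palCount_nil : palCount ([] : List A) = 1 := by
  have : PalSet ([] : List A) = {[]} := by
    ext v
    simp [PalSet, IsPalindrome]
    rintro rfl; rfl
  rw [palCount_eq, this, Set.ncard_singleton]

lemma palCount_append_le (w t : List A) : palCount (w ++ t) ≤ palCount w + t.length := by
  induction t using List.reverseRecOn with
  | nil => simp
  | append_singleton t a ih =>
      calc palCount (w ++ (t ++ [a])) = palCount ((w ++ t) ++ [a]) := by rw [append_assoc]
        _ ≤ palCount (w ++ t) + 1 := palCount_append_singleton _ _
        _ ≤ palCount w + (t ++ [a]).length := by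
            simp only [length_append, length_cons, length_nil]; omega

lemma palCount_le (u : List A) : palCount u ≤ u.length + 1 := by
  have := palCount_append_le [] u
  simpa [palCount_nil, Nat.add_comm] using this

lemma palSet_reverse (u : List A) : PalSet u.reverse = PalSet u := by
  ext v
  constructor
  · rintro ⟨hinf, hpal⟩
    refine ⟨?_, hpal⟩
    have h2 : v.reverse <:+: u.reverse.reverse := reverse_infix.mpr hinf
    rwa [hpal, reverse_reverse] at h2
  · rintro ⟨hinf, hpal⟩
    refine ⟨?_, hpal⟩
    have h2 : v.reverse <:+: u.reverse := reverse_infix.mpr hinf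
    rwa [hpal] at h2

lemma rich_of_prefix {w u : List A} (h : w <+: u) (hu : RichList u) : RichList w := by
  obtain ⟨t, rfl⟩ := h
  have h1 := palCount_append_le w t
  have h2 := palCount_le w
  unfold RichList at *
  simp only [length_append] at hu
  omega

lemma rich_reverse {u : List A} (hu : RichList u) : RichList u.reverse := by
  unfold RichList at *
  rw [palCount_eq, palSet_reverse, ← palCount_eq, length_reverse]
  exact hu

lemma rich_of_infix {w u : List A} (h : w <:+: u) (hu : RichList u) : RichList w := by
  obtain ⟨s, t, rfl⟩ := h
  have hsuf : RichList (w ++ t) := by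
    have hpre : (w ++ t).reverse <+: (s ++ w ++ t).reverse := by
      rw [reverse_prefix]
      exact ⟨s, by simp [append_assoc]⟩
    have := rich_of_prefix hpre (rich_reverse hu)
    simpa using rich_reverse this
  exact rich_of_prefix ⟨t, rfl⟩ hsuf

end UpperBound

/-! ### Palindrome counting: lower bound via three central families -/

section LowerBound

def cenE (t : List (Fin 2)) (j : ℕ) : List (Fin 2) := (t.take j).reverse ++ t.take j
def cenO (x : Fin 2) (t : List (Fin 2)) (j : ℕ) : List (Fin 2) :=
  (t.take j).reverse ++ x :: t.take j

lemma cenE_pal (t : List (Fin 2)) (j : ℕ) : IsPalindrome (cenE t j) := by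
  simp [cenE, IsPalindrome, reverse_append]
lemma cenO_pal (x : Fin 2) (t : List (Fin 2)) (j : ℕ) : IsPalindrome (cenO x t j) := by
  simp [cenO, IsPalindrome, reverse_append]

lemma middle_infix (t s : List (Fin 2)) (j : ℕ) :
    (t.take j).reverse ++ s ++ t.take j <:+: t.reverse ++ s ++ t := by
  refine ⟨(t.drop j).reverse, t.drop j, ?_⟩
  have h1 : t = t.take j ++ t.drop j := (take_append_drop j t).symm
  calc (t.drop j).reverse ++ ((t.take j).reverse ++ s ++ t.take j) ++ t.drop j
      = ((t.drop j).reverse ++ (t.take j).reverse) ++ s ++ (t.take j ++ t.drop j) := by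
        simp [append_assoc]
    _ = t.reverse ++ s ++ t := by rw [← reverse_append, ← h1]

lemma cenE_infix {t u : List (Fin 2)} (h : t.reverse ++ t <:+: u) (j : ℕ) :
    cenE t j <:+: u := by
  have := middle_infix t [] j
  simp only [append_nil] at this
  exact this.trans h

lemma cenO_infix {x : Fin 2} {t u : List (Fin 2)} (h : t.reverse ++ x :: t <:+: u) (j : ℕ) :
    cenO x t j <:+: u := by
  have := middle_infix t [x] j
  have h2 : (t.take j).reverse ++ [x] ++ t.take j = cenO x t j := by simp [cenO]
  have h3 : t.reverse ++ [x] ++ t = t.reverse ++ x :: t := by simp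
  rw [h2, h3] at this
  exact this.trans h

lemma pal_lower (u tA tB tC : List (Fin 2))
    (hA : tA.reverse ++ tA <:+: u)
    (hB : tB.reverse ++ (0 : Fin 2) :: tB <:+: u)
    (hC : tC.reverse ++ (1 : Fin 2) :: tC <:+: u) :
    tA.length + tB.length + tC.length + 3 ≤ palCount u := by
  classical
  set FA : Finset (List (Fin 2)) := (Finset.range (tA.length + 1)).image (cenE tA) with hFA
  set FB : Finset (List (Fin 2)) := (Finset.range (tB.length + 1)).image (cenO 0 tB) with hFB
  set FC : Finset (List (Fin 2)) := (Finset.range (tC.length + 1)).image (cenO 1 tC) with hFC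
  have lenE : ∀ t : List (Fin 2), ∀ j ∈ Finset.range (t.length + 1),
      (cenE t j).length = 2 * j := by
    intro t j hj
    simp only [Finset.mem_range] at hj
    simp [cenE, length_take]
    omega
  have lenO : ∀ (x : Fin 2) (t : List (Fin 2)), ∀ j ∈ Finset.range (t.length + 1),
      (cenO x t j).length = 2 * j + 1 := by
    intro x t j hj
    simp only [Finset.mem_range] at hj
    simp [cenO, length_take]
    omega
  have injE : Set.InjOn (cenE tA) (Finset.range (tA.length + 1)) := by
    intro i hi j hj hij
    have := congrArg List.length hij
    rw [lenE tA i hi, lenE tA j hj] at this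
    omega
  have injO : ∀ (x : Fin 2) (t : List (Fin 2)),
      Set.InjOn (cenO x t) (Finset.range (t.length + 1)) := by
    intro x t i hi j hj hij
    have := congrArg List.length hij
    rw [lenO x t i hi, lenO x t j hj] at this
    omega
  have cardA : FA.card = tA.length + 1 := by
    rw [hFA, Finset.card_image_of_injOn injE, Finset.card_range]
  have cardB : FB.card = tB.length + 1 := by
    rw [hFB, Finset.card_image_of_injOn (injO 0 tB), Finset.card_range]
  have cardC : FC.card = tC.length + 1 := by
    rw [hFC, Finset.card_image_of_injOn (injO 1 tC), Finset.card_range]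
  have hAB : Disjoint FA (FB ∪ FC) := by
    rw [Finset.disjoint_left]
    intro v hv hv'
    obtain ⟨i, hi, rfl⟩ := Finset.mem_image.mp hv
    have h1 : (cenE tA i).length = 2 * i := lenE tA i hi
    rcases Finset.mem_union.mp hv' with h | h
    · obtain ⟨j, hj, he⟩ := Finset.mem_image.mp h
      have h2 := lenO 0 tB j hj
      rw [he] at h2; omega
    · obtain ⟨j, hj, he⟩ := Finset.mem_image.mp h
      have h2 := lenO 1 tC j hj
      rw [he] at h2; omega
  have hBC : Disjoint FB FC := by
    rw [Finset.disjoint_left]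
    intro v hv hv'
    obtain ⟨i, hi, rfl⟩ := Finset.mem_image.mp hv
    obtain ⟨j, hj, he⟩ := Finset.mem_image.mp hv'
    have h1 := lenO 0 tB i hi
    have h2 := lenO 1 tC j hj
    rw [he] at h2
    have hij : i = j := by omega
    subst hij
    have hti : (tB.take i).length = i := by
      simp only [Finset.mem_range] at hi; simp [length_take]; omega
    have htj : (tC.take i).length = i := by
      simp only [Finset.mem_range] at hj; simp [length_take]; omega
    have hib : i < (cenO 0 tB i).length := by omega
    have hic : i < (cenO 1 tC i).length := by rw [he]; omega
    have e0 : (cenO 0 tB i)[i]'hib = 0 := by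
      simp only [cenO]
      rw [List.getElem_append_right (by simp [hti])]
      simp [hti]
    have e1 : (cenO 1 tC i)[i]'hic = 1 := by
      simp only [cenO]
      rw [List.getElem_append_right (by simp [htj])]
      simp [htj]
    have e01 := (List.getElem_of_eq he hic).symm.trans e1
    exact absurd (e0.symm.trans e01) (by decide)
  have hsub : ((FA ∪ (FB ∪ FC) : Finset (List (Fin 2))) : Set (List (Fin 2))) ⊆ PalSet u := by
    intro v hv
    simp only [Finset.coe_union, Set.mem_union, Finset.mem_coe] at hv
    rcases hv with h | (h | h)
    · obtain ⟨j, _, rfl⟩ := Finset.mem_image.mp h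
      exact ⟨cenE_infix hA j, cenE_pal tA j⟩
    · obtain ⟨j, _, rfl⟩ := Finset.mem_image.mp h
      exact ⟨cenO_infix hB j, cenO_pal 0 tB j⟩
    · obtain ⟨j, _, rfl⟩ := Finset.mem_image.mp h
      exact ⟨cenO_infix hC j, cenO_pal 1 tC j⟩
  have cardU : (FA ∪ (FB ∪ FC)).card = tA.length + tB.length + tC.length + 3 := by
    rw [Finset.card_union_of_disjoint hAB, Finset.card_union_of_disjoint hBC,
      cardA, cardB, cardC]
    omega
  calc tA.length + tB.length + tC.length + 3 = (FA ∪ (FB ∪ FC)).card := cardU.symm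
    _ = ((FA ∪ (FB ∪ FC) : Finset (List (Fin 2))) : Set (List (Fin 2))).ncard :=
        (Set.ncard_coe_finset _).symm
    _ ≤ (PalSet u).ncard := Set.ncard_le_ncard hsub (palSet_finite u)
    _ = palCount u := rfl

lemma even_decomp (P : List (Fin 2)) (hP : IsPalindrome P) (a : ℕ) (h : P.length = 2 * a) :
    ∃ t : List (Fin 2), t.length = a ∧ P = t.reverse ++ t := by
  refine ⟨P.drop a, by rw [length_drop, h]; omega, ?_⟩
  have hsplit : P.take a ++ P.drop a = P := take_append_drop a P
  have hrev : P.reverse = (P.drop a).reverse ++ (P.take a).reverse := by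
    rw [← reverse_append, hsplit]
  have hlen : (P.drop a).reverse.length = (P.take a).length := by
    simp only [length_reverse, length_drop, length_take, h]; omega
  have heq : (P.drop a).reverse ++ (P.take a).reverse = P.take a ++ P.drop a := by
    rw [← hrev, hP, hsplit]
  have h1 : (P.drop a).reverse = P.take a := append_inj_left heq hlen
  rw [h1]
  exact hsplit.symm

lemma odd_decomp (P : List (Fin 2)) (hP : IsPalindrome P) (b : ℕ) (h : P.length = 2 * b + 1) :
    ∃ (t : List (Fin 2)) (x : Fin 2), t.length = b ∧ P = t.reverse ++ x :: t ∧
      P.count 0 = 2 * t.count 0 + (if x = 0 then 1 else 0) := by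
  have hb : b < P.length := by omega
  have hd : P.drop b = P[b] :: P.drop (b + 1) := List.drop_eq_getElem_cons hb
  have hsplit : P.take b ++ P[b] :: P.drop (b + 1) = P := by
    rw [← hd, take_append_drop]
  have hrev : P.reverse = ((P.drop (b+1)).reverse ++ [P[b]]) ++ (P.take b).reverse := by
    conv_lhs => rw [← hsplit]
    simp [reverse_append]
  have heq : ((P.drop (b+1)).reverse ++ [P[b]]) ++ (P.take b).reverse
      = (P.take b ++ [P[b]]) ++ P.drop (b+1) := by
    rw [← hrev, hP]
    conv_lhs => rw [← hsplit]
    simp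
  have hlen : ((P.drop (b+1)).reverse ++ [P[b]]).length = (P.take b ++ [P[b]]).length := by
    simp only [length_append, length_reverse, length_drop, length_take, length_cons,
      length_nil, h]
    omega
  have h1 := append_inj_right heq hlen
  have h2 : P.take b = (P.drop (b+1)).reverse := by rw [← h1, reverse_reverse]
  have hdecomp : P = (P.drop (b+1)).reverse ++ P[b] :: P.drop (b+1) := by
    rw [← h2]
    exact hsplit.symm
  refine ⟨P.drop (b + 1), P[b], by rw [length_drop, h]; omega, hdecomp, ?_⟩
  conv_lhs => rw [hdecomp]
  rw [count_append, count_cons, count_reverse]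
  rcases fin2cases (P[b]'hb) with hx | hx <;> rw [hx] <;> simp <;> omega

end LowerBound

/-! ### The fixed point machinery -/

def Wseq : ℕ → List (Fin 2) := fun k => (listApply tauf)^[k] [1]

def Zseq : ℕ → List (Fin 2)
  | 0 => [1, 0, 1, 0, 1]
  | j + 1 => [1, 0] ++ listApply tauf (Zseq j) ++ [1]

def tlen (y : ℕ → Fin 2) (m : ℕ) : ℕ := (listApply tauf (wordTake y m)).length

def qseq (y : ℕ → Fin 2) : ℕ → ℕ
  | 0 => 3
  | j + 1 => tlen y (qseq y j) - 2

section WT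
variable {A : Type*} {y : ℕ → A}

@[simp] lemma wordTake_length (n : ℕ) : (wordTake y n).length = n := by
  simp [wordTake]

lemma wordTake_succ (n : ℕ) : wordTake y (n + 1) = wordTake y n ++ [y n] := by
  simp [wordTake, range_succ]

lemma wordTake_getElem {i n : ℕ} (h : i < n) :
    (wordTake y n)[i]'(by simpa using h) = y i := by
  simp [wordTake]

lemma wordTake_take {m n : ℕ} (h : m ≤ n) : (wordTake y n).take m = wordTake y m := by
  unfold wordTake
  rw [← map_take, take_range, Nat.min_eq_left h]

lemma wordTake_prefix {m n : ℕ} (h : m ≤ n) : wordTake y m <+: wordTake y n := by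
  rw [← wordTake_take h]; exact take_prefix _ _

lemma wordTake_add (i L : ℕ) :
    wordTake y (i + L) = wordTake y i ++ (List.range L).map (fun k => y (i + k)) := by
  unfold wordTake
  rw [List.range_add, map_append, map_map]
  rfl
end WT

section Fixed
variable {y : ℕ → Fin 2}

lemma wseq_succ (k : ℕ) : Wseq (k + 1) = listApply tauf (Wseq k) :=
  Function.iterate_succ_apply' _ _ _

lemma zpal (j : ℕ) : IsPalindrome (Zseq j) := by
  induction j with
  | zero => rfl
  | succ j ih => exact palZstep _ ih

lemma zlen_rec (j : ℕ) :
    (Zseq (j + 1)).length = 2 * (Zseq j).length + (Zseq j).count 0 + 3 := by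
  show ([1, 0] ++ listApply tauf (Zseq j) ++ [1]).length = _
  simp only [length_append, length_cons, length_nil, lenTau]
  omega

lemma zcount_rec (j : ℕ) : (Zseq (j + 1)).count 0 = (Zseq j).length + 1 := by
  show ([1, 0] ++ listApply tauf (Zseq j) ++ [1]).count 0 = _
  simp [count_append, countTau]

-- facts depending on the fixed-point property
lemma hT (hfix : IsMorphicImage tauf y y) (m : ℕ) :
    listApply tauf (wordTake y m) = wordTake y (tlen y m) := by
  obtain ⟨n, hn⟩ := hfix m
  have hlen : n = tlen y m := by
    have := congrArg List.length hn
    simpa [tlen] using this.symm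
  rw [hn, hlen]

lemma tlen_eq (m : ℕ) : tlen y m = 2 * m + (wordTake y m).count 0 := by
  rw [tlen, lenTau, wordTake_length]

lemma count_wordTake_mono {a b : ℕ} (h : a ≤ b) :
    (wordTake y a).count 0 ≤ (wordTake y b).count 0 := by
  obtain ⟨t, ht⟩ := wordTake_prefix (y := y) h
  rw [← ht, count_append]
  omega

lemma tlen_gap {a b : ℕ} (h : a ≤ b) : tlen y a + 2 * (b - a) ≤ tlen y b := by
  rw [tlen_eq, tlen_eq]
  have := count_wordTake_mono (y := y) h
  omega

lemma tlen_lb (m : ℕ) : 2 * m ≤ tlen y m := by rw [tlen_eq]; omega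

lemma starts (hfix : IsMorphicImage tauf y y) (m : ℕ) : y (tlen y m) = 1 := by
  obtain ⟨v, hv⟩ := headTau (y m)
  have hexp : wordTake y (tlen y (m + 1)) = listApply tauf (wordTake y m) ++ (1 :: v) := by
    rw [← hT hfix (m + 1), wordTake_succ, listApply_append]
    simp [hv]
  have hlt : tlen y m < tlen y (m + 1) := by
    have := tlen_gap (y := y) (show m ≤ m + 1 by omega)
    omega
  have hlen : (listApply tauf (wordTake y m)).length = tlen y m := rfl
  have hg := wordTake_getElem (y := y) hlt
  have e2 : (listApply tauf (wordTake y m) ++ 1 :: v)[tlen y m]'(by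
      simp only [length_append, hlen, length_cons]; omega) = 1 := by
    rw [List.getElem_append_right (le_of_eq hlen)]
    simp [hlen]
  have hg2 := List.getElem_of_eq hexp
    (show tlen y m < (wordTake y (tlen y (m + 1))).length by simpa using hlt)
  exact hg.symm.trans (hg2.trans e2)

lemma hQW (hfix : IsMorphicImage tauf y y) (h0 : y 0 = 1) (k : ℕ) :
    wordTake y (Wseq k).length = Wseq k := by
  induction k with
  | zero =>
      show wordTake y 1 = [1]
      rw [wordTake_succ, h0]
      rfl
  | succ k ih =>
      have h1 : Wseq (k + 1) = listApply tauf (wordTake y (Wseq k).length) := by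
        rw [ih, ← wseq_succ]
      have h2 : Wseq (k + 1) = wordTake y (tlen y (Wseq k).length) := by
        rw [h1, hT hfix]
      have h3 : (Wseq (k + 1)).length = tlen y (Wseq k).length := by
        conv_lhs => rw [h2]
        rw [wordTake_length]
      rw [h3, ← h2]

lemma tlen_lw (hfix : IsMorphicImage tauf y y) (h0 : y 0 = 1) (k : ℕ) :
    tlen y (Wseq k).length = (Wseq (k + 1)).length := by
  rw [tlen, hQW hfix h0 k, ← wseq_succ]

lemma lw_count (k : ℕ) : (Wseq (k + 1)).count 0 = (Wseq k).length := by
  rw [wseq_succ]; exact countTau _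

lemma lw_rec (k : ℕ) :
    (Wseq (k + 2)).length = 2 * (Wseq (k + 1)).length + (Wseq k).length := by
  rw [wseq_succ (k + 1), lenTau, lw_count]

lemma lw_pos (k : ℕ) : 1 ≤ (Wseq k).length := by
  induction k with
  | zero => rfl
  | succ k ih => rw [wseq_succ, lenTau]; omega

lemma lw_mono (k : ℕ) : (Wseq k).length < (Wseq (k + 1)).length := by
  have := lw_pos k
  rw [wseq_succ, lenTau]
  omega

lemma lw_ge (k : ℕ) : k ≤ (Wseq k).length := by
  induction k with
  | zero => omega
  | succ k ih => have := lw_mono k; omega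

lemma lw_parity (k : ℕ) : (Wseq k).length % 2 + (Wseq (k + 1)).length % 2 = 1 := by
  induction k with
  | zero => rfl
  | succ k ih =>
      have h2 := lw_rec k
      simp only [show k + 1 + 1 = k + 2 from rfl]
      omega

lemma qpal (k : ℕ) : IsPalindrome (Wseq (k + 1) ++ [1]) := by
  induction k with
  | zero => rfl
  | succ k ih =>
      rw [wseq_succ]
      exact palQstep _ ih

lemma y_at_lw (hfix : IsMorphicImage tauf y y) (h0 : y 0 = 1) (k : ℕ) :
    y (Wseq (k + 1)).length = 1 := by
  rw [← tlen_lw hfix h0 k]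
  exact starts hfix _

lemma hQfact (hfix : IsMorphicImage tauf y y) (h0 : y 0 = 1) (k : ℕ) :
    wordTake y ((Wseq (k + 1)).length + 1) = Wseq (k + 1) ++ [1] := by
  rw [wordTake_succ, hQW hfix h0, y_at_lw hfix h0]

lemma countQ (k : ℕ) : (Wseq (k + 1) ++ [1]).count 0 = (Wseq k).length := by
  rw [count_append, lw_count]
  rfl

lemma q_ge (hfix : IsMorphicImage tauf y y) (j : ℕ) : 3 ≤ qseq y j := by
  induction j with
  | zero => rfl
  | succ j ih =>
      show 3 ≤ tlen y (qseq y j) - 2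
      have := tlen_lb (y := y) (qseq y j)
      omega

lemma hOcc (hfix : IsMorphicImage tauf y y) (h0 : y 0 = 1) :
    ∀ j, wordTake y (qseq y j + (Zseq j).length) = wordTake y (qseq y j) ++ Zseq j := by
  intro j
  induction j with
  | zero =>
      show wordTake y (3 + 5) = wordTake y 3 ++ [1, 0, 1, 0, 1]
      have h12 : wordTake y (Wseq 3).length = Wseq 3 := hQW hfix h0 3
      have hl : (Wseq 3).length = 12 := rfl
      rw [hl] at h12
      have h8 : wordTake y 8 = (wordTake y 12).take 8 := (wordTake_take (by omega)).symm
      have h3 : wordTake y 3 = (wordTake y 12).take 3 := (wordTake_take (by omega)).symm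
      rw [show (3 : ℕ) + 5 = 8 from rfl, h8, h3, h12]
      rfl
  | succ j ih =>
      set q := qseq y j with hq
      set Z := Zseq j with hZ
      have hq3 : 3 ≤ q := q_ge hfix j
      have h1 : wordTake y (tlen y (q + Z.length)) = wordTake y (tlen y q) ++ listApply tauf Z := by
        rw [← hT hfix, ih, listApply_append, hT hfix]
      -- the image of the prefix of length q ends in [1, 0]
      obtain ⟨v, hv⟩ : ∃ v, listApply tauf (wordTake y q) = v ++ [1, 0] := by
        have hq' : q - 1 + 1 = q := by omega
        have := wordTake_succ (y := y) (q - 1)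
        rw [hq'] at this
        rw [this]
        exact endsTau _ _
      have hvlen : v.length + 2 = tlen y q := by
        have := congrArg List.length hv
        simp only [length_append, length_cons, length_nil] at this
        rw [tlen]
        omega
      have hvP : v = wordTake y (tlen y q - 2) := by
        have hPt : wordTake y (tlen y q) = v ++ [1, 0] := by rw [← hT hfix, hv]
        have : (wordTake y (tlen y q)).take (tlen y q - 2) = wordTake y (tlen y q - 2) :=
          wordTake_take (by omega)
        rw [hPt] at this
        rw [← this, show tlen y q - 2 = v.length by omega, take_left]
      have hnext : y (tlen y (q + Z.length)) = 1 := starts hfix _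
      have hsum : tlen y (q + Z.length) = tlen y q + (listApply tauf Z).length := by
        have := congrArg List.length h1
        simpa using this
      have harith : qseq y (j + 1) + (Zseq (j + 1)).length = tlen y (q + Z.length) + 1 := by
        show tlen y q - 2 + ([1, 0] ++ listApply tauf Z ++ [1]).length = _
        have hlb := tlen_lb (y := y) q
        simp only [length_append, length_cons, length_nil]
        omega
      rw [harith, wordTake_succ, hnext, h1]
      have hTq : wordTake y (tlen y q) = v ++ [1, 0] := by rw [← hT hfix, hv]
      rw [hTq, hvP]
      show _ = wordTake y (tlen y q - 2) ++ ([1, 0] ++ listApply tauf Z ++ [1])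
      simp [append_assoc]

lemma invariants (j : ℕ) :
    (Zseq j).length + (Wseq (j + 2)).length + 2 = (Wseq (j + 3)).length ∧
    (Zseq j).count 0 + (Wseq (j + 1)).length + 1 = (Wseq (j + 2)).length := by
  induction j with
  | zero => exact ⟨rfl, rfl⟩
  | succ j ih =>
      obtain ⟨ih1, ih2⟩ := ih
      have hz1 := zlen_rec j
      have hz2 := zcount_rec j
      have hw1 := lw_rec (j + 1)
      have hw2 := lw_rec (j + 2)
      simp only [show j + 1 + 1 = j + 2 from rfl, show j + 1 + 2 = j + 3 from rfl,
        show j + 2 + 1 = j + 3 from rfl, show j + 2 + 2 = j + 4 from rfl,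
        show j + 1 + 3 = j + 4 from rfl] at hz1 hz2 hw1 hw2 ⊢
      constructor <;> omega

lemma I3 (hfix : IsMorphicImage tauf y y) (h0 : y 0 = 1) (j : ℕ) :
    qseq y j + (Zseq j).length + 2 ≤ (Wseq (j + 3)).length := by
  induction j with
  | zero => show 3 + 5 + 2 ≤ 12; omega
  | succ j ih =>
      set a := qseq y j + (Zseq j).length with ha
      have hgap := tlen_gap (y := y) (show a ≤ (Wseq (j + 3)).length by omega)
      have htl : tlen y (Wseq (j + 3)).length = (Wseq (j + 4)).length := tlen_lw hfix h0 _
      have hsum : tlen y a = tlen y (qseq y j) + (listApply tauf (Zseq j)).length := by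
        have := congrArg List.length (by rw [← hT hfix, hOcc hfix h0 j, listApply_append, hT hfix] :
          wordTake y (tlen y a) = wordTake y (tlen y (qseq y j)) ++ listApply tauf (Zseq j))
        simpa using this
      have harith : qseq y (j + 1) + (Zseq (j + 1)).length = tlen y a + 1 := by
        show tlen y (qseq y j) - 2 + ([1, 0] ++ listApply tauf (Zseq j) ++ [1]).length = _
        have hlb := tlen_lb (y := y) (qseq y j)
        have hq3 := q_ge hfix j
        simp only [length_append, length_cons, length_nil]
        omega
      simp only [show j + 1 + 3 = j + 4 from rfl]
      omega

end Fixed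

section Main
variable {y : ℕ → Fin 2}

lemma richQ (hfix : IsMorphicImage tauf y y) (h0 : y 0 = 1) (j : ℕ) :
    RichList (wordTake y ((Wseq (j + 3)).length + 1)) := by
  set n3 := (Wseq (j + 3)).length with hn3
  set u := wordTake y (n3 + 1) with hudef
  have hulen : u.length = n3 + 1 := wordTake_length _
  have hu : u = Wseq (j + 3) ++ [1] := by
    have := hQfact hfix h0 (j + 2)
    simpa only [show j + 2 + 1 = j + 3 from rfl] using this
  have hQprev : wordTake y ((Wseq (j + 2)).length + 1) = Wseq (j + 2) ++ [1] := by
    have := hQfact hfix h0 (j + 1)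
    simpa only [show j + 1 + 1 = j + 2 from rfl] using this
  have hpal1 : IsPalindrome (Wseq (j + 3) ++ [1]) := by
    have := qpal (j + 2)
    simpa only [show j + 2 + 1 = j + 3 from rfl] using this
  have hpal2 : IsPalindrome (Wseq (j + 2) ++ [1]) := by
    have := qpal (j + 1)
    simpa only [show j + 1 + 1 = j + 2 from rfl] using this
  have hpalZ : IsPalindrome (Zseq j) := zpal j
  have hmono : (Wseq (j + 2)).length < n3 := by
    have := lw_mono (j + 2)
    simpa only [show j + 2 + 1 = j + 3 from rfl] using this
  have hinfix1 : Wseq (j + 3) ++ [1] <:+: u := by rw [← hu]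
  have hinfix2 : Wseq (j + 2) ++ [1] <:+: u := by
    have hpre : wordTake y ((Wseq (j + 2)).length + 1) <+: u :=
      wordTake_prefix (by omega)
    rw [hQprev] at hpre
    exact hpre.isInfix
  have hI3 : qseq y j + (Zseq j).length + 2 ≤ n3 := I3 hfix h0 j
  have hinfixZ : Zseq j <:+: u := by
    have hpre : wordTake y (qseq y j + (Zseq j).length) <+: u :=
      wordTake_prefix (by omega)
    obtain ⟨t, ht⟩ := hpre
    rw [hOcc hfix h0 j] at ht
    exact ⟨wordTake y (qseq y j), t, by rw [← ht]⟩
  have hlen1 : (Wseq (j + 3) ++ [1]).length = n3 + 1 := by simp [hn3]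
  have hlen2 : (Wseq (j + 2) ++ [1]).length = (Wseq (j + 2)).length + 1 := by simp
  have hcount1 : (Wseq (j + 3) ++ [1]).count 0 = (Wseq (j + 2)).length := by
    have := countQ (j + 2)
    simpa only [show j + 2 + 1 = j + 3 from rfl] using this
  have hcount2 : (Wseq (j + 2) ++ [1]).count 0 = (Wseq (j + 1)).length := by
    have := countQ (j + 1)
    simpa only [show j + 1 + 1 = j + 2 from rfl] using this
  obtain ⟨hinv1, hinv2⟩ := invariants j
  have hp1 : (Wseq (j + 1)).length % 2 + (Wseq (j + 2)).length % 2 = 1 := by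
    have := lw_parity (j + 1)
    simpa only [show j + 1 + 1 = j + 2 from rfl] using this
  have hp2 : (Wseq (j + 2)).length % 2 + n3 % 2 = 1 := by
    have := lw_parity (j + 2)
    simpa only [show j + 2 + 1 = j + 3 from rfl] using this
  have hupper := palCount_le u
  rcases Nat.even_or_odd n3 with he | ho
  · -- n3 even : Wseq (j+2) ++ [1] is the even palindrome, u is the 0-centered one
    obtain ⟨e, he'⟩ := he
    obtain ⟨a, ha⟩ : ∃ a, (Wseq (j + 2) ++ [1]).length = 2 * a :=
      ⟨((Wseq (j + 2)).length + 1) / 2, by rw [hlen2]; omega⟩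
    obtain ⟨tA, htAlen, htAeq⟩ := even_decomp _ hpal2 a ha
    obtain ⟨b, hb⟩ : ∃ b, (Wseq (j + 3) ++ [1]).length = 2 * b + 1 :=
      ⟨n3 / 2, by rw [hlen1]; omega⟩
    obtain ⟨tB, xB, htBlen, htBeq, htBcount⟩ := odd_decomp _ hpal1 b hb
    have hxB : xB = 0 := by
      rcases fin2cases xB with h | h
      · exact h
      · exfalso
        rw [h, if_neg (show ¬(1 : Fin 2) = 0 by decide)] at htBcount
        rw [hcount1] at htBcount
        omega
    obtain ⟨g, hg⟩ : ∃ g, (Zseq j).length = 2 * g + 1 := ⟨((Zseq j).length - 1) / 2, by omega⟩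
    obtain ⟨tC, xC, htClen, htCeq, htCcount⟩ := odd_decomp _ hpalZ g hg
    have hxC : xC = 1 := by
      rcases fin2cases xC with h | h
      · exfalso
        rw [h, if_pos rfl] at htCcount
        omega
      · exact h
    have hA : tA.reverse ++ tA <:+: u := by rw [← htAeq]; exact hinfix2
    have hB : tB.reverse ++ (0 : Fin 2) :: tB <:+: u := by
      rw [← hxB, ← htBeq]; exact hinfix1
    have hC : tC.reverse ++ (1 : Fin 2) :: tC <:+: u := by
      rw [← hxC, ← htCeq]; exact hinfixZ
    have hlow := pal_lower u tA tB tC hA hB hC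
    unfold RichList
    rw [hulen]
    have h2a := congrArg List.length htAeq
    have h2b := congrArg List.length htBeq
    have h2c := congrArg List.length htCeq
    simp only [length_append, length_reverse, length_cons, hlen1, hlen2] at h2a h2b h2c
    omega
  · -- n3 odd : u is the even palindrome, Wseq (j+2) ++ [1] is the 0-centered one
    obtain ⟨e, he'⟩ := ho
    obtain ⟨a, ha⟩ : ∃ a, (Wseq (j + 3) ++ [1]).length = 2 * a :=
      ⟨(n3 + 1) / 2, by rw [hlen1]; omega⟩
    obtain ⟨tA, htAlen, htAeq⟩ := even_decomp _ hpal1 a ha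
    obtain ⟨b, hb⟩ : ∃ b, (Wseq (j + 2) ++ [1]).length = 2 * b + 1 :=
      ⟨(Wseq (j + 2)).length / 2, by rw [hlen2]; omega⟩
    obtain ⟨tB, xB, htBlen, htBeq, htBcount⟩ := odd_decomp _ hpal2 b hb
    have hxB : xB = 0 := by
      rcases fin2cases xB with h | h
      · exact h
      · exfalso
        rw [h, if_neg (show ¬(1 : Fin 2) = 0 by decide)] at htBcount
        rw [hcount2] at htBcount
        omega
    obtain ⟨g, hg⟩ : ∃ g, (Zseq j).length = 2 * g + 1 := ⟨((Zseq j).length - 1) / 2, by omega⟩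
    obtain ⟨tC, xC, htClen, htCeq, htCcount⟩ := odd_decomp _ hpalZ g hg
    have hxC : xC = 1 := by
      rcases fin2cases xC with h | h
      · exfalso
        rw [h, if_pos rfl] at htCcount
        omega
      · exact h
    have hA : tA.reverse ++ tA <:+: u := by rw [← htAeq]; exact hinfix1
    have hB : tB.reverse ++ (0 : Fin 2) :: tB <:+: u := by
      rw [← hxB, ← htBeq]; exact hinfix2
    have hC : tC.reverse ++ (1 : Fin 2) :: tC <:+: u := by
      rw [← hxC, ← htCeq]; exact hinfixZ
    have hlow := pal_lower u tA tB tC hA hB hC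
    unfold RichList
    rw [hulen]
    have h2a := congrArg List.length htAeq
    have h2b := congrArg List.length htBeq
    have h2c := congrArg List.length htCeq
    simp only [length_append, length_reverse, length_cons, hlen1, hlen2] at h2a h2b h2c
    omega

end Main

/-- The fixed point beginning in `c` of the substitution
`b ↦ ccb, c ↦ cb` (encoded on `Fin 2` with `b = 0, c = 1`) is rich. -/
theorem tau_fixedPoint_rich (y : ℕ → Fin 2)
    (hfix : IsMorphicImage (![[1, 1, 0], [1, 0]] : Fin 2 → List (Fin 2)) y y)
    (h0 : y 0 = 1) :
    RichWord y := by
  have hfix' : IsMorphicImage tauf y y := hfix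
  rintro u ⟨i, hocc⟩
  have hPiL : wordTake y (i + u.length) = wordTake y i ++ u := by
    rw [wordTake_add, hocc]
  have hinf1 : u <:+: wordTake y (i + u.length) :=
    ⟨wordTake y i, [], by simp [hPiL]⟩
  have hK : i + u.length ≤ (Wseq (i + u.length + 3)).length + 1 := by
    have := lw_ge (i + u.length + 3)
    omega
  have hinf2 : wordTake y (i + u.length) <+: wordTake y ((Wseq (i + u.length + 3)).length + 1) :=
    wordTake_prefix hK
  exact rich_of_infix (hinf1.trans hinf2.isInfix) (richQ hfix' h0 (i + u.length))
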